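/- arXiv:2106.04988 — 3 statements merged into one kernel-verified Lean document; each statement's English description precedes it below -/
import Mathlib

section
/- Let l : ℝ → ℝ be concave on the interval [0,1]. Suppose 0 ≤ x₁ ≤ y₁ ≤ y₀ ≤ x₀ ≤ 1 and p, q ∈ [0,1] satisfy p·x₁ + (1−p)·x₀ = q·y₁ + (1−q)·y₀. Then p·l(x₁) + (1−p)·l(x₀) ≤ q·l(y₁) + (1−q)·l(y₀). -/
/-- Key convexity lemma behind the nested-posterior-interval rule.
If `l` is concave on `[0,1]`, `0 ≤ x₁ ≤ y₁ ≤ y₀ ≤ x₀ ≤ 1`, and `p, q ∈ [0,1]` give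
the same mean, `p·x₁ + (1−p)·x₀ = q·y₁ + (1−q)·y₀`, then the expectation of `l`
over the wider interval is smaller. -/
theorem nested_interval_concave_le
    (l : ℝ → ℝ) (hl : ConcaveOn ℝ (Set.Icc (0:ℝ) 1) l)
    (x₁ y₁ y₀ x₀ p q : ℝ)
    (hx₁ : 0 ≤ x₁) (hxy₁ : x₁ ≤ y₁) (hy : y₁ ≤ y₀) (hxy₀ : y₀ ≤ x₀) (hx₀ : x₀ ≤ 1)
    (hp : p ∈ Set.Icc (0:ℝ) 1) (hq : q ∈ Set.Icc (0:ℝ) 1)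
    (hmean : p * x₁ + (1 - p) * x₀ = q * y₁ + (1 - q) * y₀) :
    p * l x₁ + (1 - p) * l x₀ ≤ q * l y₁ + (1 - q) * l y₀ := by
  obtain ⟨hp0, hp1⟩ := hp
  obtain ⟨hq0, hq1⟩ := hq
  rcases eq_or_lt_of_le (hxy₁.trans (hy.trans hxy₀)) with heq | hlt
  · -- x₁ = x₀, all points equal
    have h1 : y₁ = x₁ := le_antisymm (by linarith) hxy₁
    have h0 : y₀ = x₁ := le_antisymm (by linarith) (hxy₁.trans hy)
    rw [h1, h0, ← heq]
    linarith
  · have hd : (0:ℝ) < x₀ - x₁ := by linarith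
    have hmx₁ : x₁ ∈ Set.Icc (0:ℝ) 1 := ⟨hx₁, by linarith⟩
    have hmx₀ : x₀ ∈ Set.Icc (0:ℝ) 1 := ⟨by linarith, hx₀⟩
    set a₁ : ℝ := (x₀ - y₁) / (x₀ - x₁) with ha₁
    set a₀ : ℝ := (x₀ - y₀) / (x₀ - x₁) with ha₀
    have ha₁0 : 0 ≤ a₁ := div_nonneg (by linarith) hd.le
    have ha₁1 : a₁ ≤ 1 := (div_le_one hd).2 (by linarith)
    have ha₀0 : 0 ≤ a₀ := div_nonneg (by linarith) hd.le
    have ha₀1 : a₀ ≤ 1 := (div_le_one hd).2 (by linarith)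
    have hy₁ : a₁ * x₁ + (1 - a₁) * x₀ = y₁ := by
      rw [ha₁]; field_simp [hd.ne']; ring
    have hy₀ : a₀ * x₁ + (1 - a₀) * x₀ = y₀ := by
      rw [ha₀]; field_simp [hd.ne']; ring
    have hc₁ : a₁ * l x₁ + (1 - a₁) * l x₀ ≤ l y₁ := by
      have := hl.2 hmx₁ hmx₀ ha₁0 (show (0:ℝ) ≤ 1 - a₁ by linarith) (show a₁ + (1 - a₁) = 1 by ring)
      simpa [smul_eq_mul, hy₁] using this
    have hc₀ : a₀ * l x₁ + (1 - a₀) * l x₀ ≤ l y₀ := by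
      have := hl.2 hmx₁ hmx₀ ha₀0 (show (0:ℝ) ≤ 1 - a₀ by linarith) (show a₀ + (1 - a₀) = 1 by ring)
      simpa [smul_eq_mul, hy₀] using this
    have hA : q * a₁ + (1 - q) * a₀ = p := by
      have h : p * x₁ + (1 - p) * x₀ =
          q * (a₁ * x₁ + (1 - a₁) * x₀) + (1 - q) * (a₀ * x₁ + (1 - a₀) * x₀) := by
        rw [hy₁, hy₀]; exact hmean
      have h2 : (p - (q * a₁ + (1 - q) * a₀)) * (x₁ - x₀) = 0 := by linear_combination h
      have := mul_eq_zero.1 h2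
      rcases this with h3 | h3
      · linarith
      · exfalso; linarith
    calc p * l x₁ + (1 - p) * l x₀
        = q * (a₁ * l x₁ + (1 - a₁) * l x₀) + (1 - q) * (a₀ * l x₁ + (1 - a₀) * l x₀) := by
          rw [← hA]; ring
      _ ≤ q * l y₁ + (1 - q) * l y₀ := by
          have := mul_le_mul_of_nonneg_left hc₁ hq0
          have := mul_le_mul_of_nonneg_left hc₀ (by linarith : (0:ℝ) ≤ 1 - q)
          linarith
end

section
/- Consider the bilinear loss l*(p) = min{C_R, p·C_F} with 0 < C_R < C_F and kink at p̃ = C_R/C_F. If the posterior interval [P[u = 0 | y_i = 1], P[u = 0 | y_i = 0]] of component c_i does not contain p̃ (i.e. either both endpoints are ≤ p̃ or both are ≥ p̃), then L_ω(i) = L_π, i.e. VoI_G(i) = 0. -/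
open scoped Classical

/-- Probability of an event `E` under weights `w` on a finite outcome space. -/
noncomputable def Pr {Ω : Type*} [Fintype Ω] (w : Ω → ℝ) (E : Ω → Prop) : ℝ :=
  ∑ ω ∈ Finset.univ.filter E, w ω

/-- Conditional probability `P[A | B]`. -/
noncomputable def cPr {Ω : Type*} [Fintype Ω] (w : Ω → ℝ) (A B : Ω → Prop) : ℝ :=
  Pr w (fun ω => A ω ∧ B ω) / Pr w B

/-- Posterior expected loss of inspecting a component with binary inspection outcome `y`
(`y = false` is an alarm), where `F` is the system-failure event and `l` the optimal
expected loss as a function of the system failure probability. -/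
noncomputable def postLoss {Ω : Type*} [Fintype Ω] (w : Ω → ℝ) (F : Ω → Prop)
    (y : Ω → Bool) (l : ℝ → ℝ) : ℝ :=
  Pr w (fun ω => y ω = false) * l (cPr w F (fun ω => y ω = false))
    + (1 - Pr w (fun ω => y ω = false)) * l (cPr w F (fun ω => y ω = true))

/-- Global value of information of inspecting a component with inspection outcome `y`. -/
noncomputable def VoIG {Ω : Type*} [Fintype Ω] (w : Ω → ℝ) (F : Ω → Prop)
    (y : Ω → Bool) (l : ℝ → ℝ) : ℝ :=
  l (Pr w F) - postLoss w F y l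

/-- For the bilinear loss `l*(p) = min{C_R, p·C_F}` with `0 < C_R < C_F` and
kink at `p̃ = C_R/C_F`, if the posterior interval of component `c_i` does not contain `p̃`
(both endpoints on the same side of `p̃`), then `L_ω(i) = L_π`, i.e. `VoI_G(i) = 0`. -/
theorem bilinear_loss_voi_zero_of_avoids_kink {Ω : Type*} [Fintype Ω] (w : Ω → ℝ)
    (hw0 : ∀ ω, 0 ≤ w ω) (hw1 : ∑ ω, w ω = 1)
    (u yi : Ω → Bool)
    (hi0 : 0 < Pr w (fun ω => yi ω = false)) (hi1 : Pr w (fun ω => yi ω = false) < 1)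
    (CR CF : ℝ) (hCR : 0 < CR) (hCRF : CR < CF)
    (havoid :
      (cPr w (fun ω => u ω = false) (fun ω => yi ω = true) ≤ CR / CF
        ∧ cPr w (fun ω => u ω = false) (fun ω => yi ω = false) ≤ CR / CF)
      ∨ (CR / CF ≤ cPr w (fun ω => u ω = false) (fun ω => yi ω = true)
        ∧ CR / CF ≤ cPr w (fun ω => u ω = false) (fun ω => yi ω = false))) :
    postLoss w (fun ω => u ω = false) yi (fun p => min CR (p * CF))
        = min CR (Pr w (fun ω => u ω = false) * CF)
      ∧ VoIG w (fun ω => u ω = false) yi (fun p => min CR (p * CF)) = 0 := by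
  have hCF : (0:ℝ) < CF := lt_trans hCR hCRF
  set h : ℝ := Pr w (fun ω => yi ω = false) with hh
  set p0 : ℝ := cPr w (fun ω => u ω = false) (fun ω => yi ω = false) with hp0
  set p1 : ℝ := cPr w (fun ω => u ω = false) (fun ω => yi ω = true) with hp1
  have pr_eq : ∀ (A B : Ω → Prop), (∀ ω, A ω ↔ B ω) → Pr w A = Pr w B := by
    intro A B hAB
    unfold Pr
    apply Finset.sum_congr _ (fun x _ => rfl)
    ext ω; simp [Finset.mem_filter, hAB ω]
  have pr_add : ∀ (A : Ω → Prop), Pr w A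
      = Pr w (fun ω => A ω ∧ yi ω = false) + Pr w (fun ω => A ω ∧ yi ω = true) := by
    intro A
    unfold Pr
    rw [← Finset.sum_filter_add_sum_filter_not (Finset.univ.filter A)
      (fun ω => yi ω = false) w]
    have e : ∀ (s t : Finset Ω), s = t → ∑ ω ∈ s, w ω = ∑ ω ∈ t, w ω := by
      intro s t hst; rw [hst]
    refine congrArg₂ (· + ·) (e _ _ ?_) (e _ _ ?_)
    · ext ω; simp [Finset.mem_filter]
    · ext ω; simp [Finset.mem_filter, Bool.not_eq_false]
  have pr_univ : Pr w (fun _ => True) = 1 := by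
    unfold Pr; rw [← hw1]
    apply Finset.sum_congr _ (fun x _ => rfl)
    ext ω; simp
  -- Pr(y = true) = 1 - h
  have htrue : Pr w (fun ω => yi ω = true) = 1 - h := by
    have h2 := pr_add (fun _ => True)
    rw [pr_univ] at h2
    have e1 : Pr w (fun ω => True ∧ yi ω = false) = h := by
      rw [hh]; exact pr_eq _ _ (by intro ω; simp)
    have e2 : Pr w (fun ω => True ∧ yi ω = true) = Pr w (fun ω => yi ω = true) :=
      pr_eq _ _ (by intro ω; simp)
    rw [e1, e2] at h2
    linarith
  have h1 : (0:ℝ) < 1 - h := by linarith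
  -- law of total probability
  have htot : Pr w (fun ω => u ω = false) = h * p0 + (1 - h) * p1 := by
    have e0 : h * p0 = Pr w (fun ω => u ω = false ∧ yi ω = false) := by
      rw [hp0]; unfold cPr; rw [← hh]; field_simp
    have e1 : (1 - h) * p1 = Pr w (fun ω => u ω = false ∧ yi ω = true) := by
      rw [hp1]; unfold cPr; rw [htrue]; field_simp
    rw [e0, e1]; exact pr_add _
  have key : ∀ p : ℝ, p ≤ CR / CF → min CR (p * CF) = p * CF := by
    intro p hp
    exact min_eq_right ((le_div_iff₀ hCF).mp hp)
  have key' : ∀ p : ℝ, CR / CF ≤ p → min CR (p * CF) = CR := by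
    intro p hp
    exact min_eq_left ((div_le_iff₀ hCF).mp hp)
  have hpost : postLoss w (fun ω => u ω = false) yi (fun p => min CR (p * CF))
      = min CR (Pr w (fun ω => u ω = false) * CF) := by
    unfold postLoss
    rcases havoid with ⟨ha1, ha0⟩ | ⟨ha1, ha0⟩
    · have hπ : Pr w (fun ω => u ω = false) ≤ CR / CF := by
        rw [htot]; nlinarith
      rw [key _ hπ]
      show h * min CR (p0 * CF) + (1 - h) * min CR (p1 * CF) = _
      rw [key _ ha0, key _ ha1, htot]; ring
    · have hπ : CR / CF ≤ Pr w (fun ω => u ω = false) := by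
        rw [htot]; nlinarith
      rw [key' _ hπ]
      show h * min CR (p0 * CF) + (1 - h) * min CR (p1 * CF) = _
      rw [key' _ ha0, key' _ ha1]; ring
  refine ⟨hpost, ?_⟩
  unfold VoIG
  rw [hpost]; ring
end

section
/- Suppose the posterior intervals I_i = [P[u = 0 | y_i = 1], P[u = 0 | y_i = 0]] and I_j = [P[u = 0 | y_j = 1], P[u = 0 | y_j = 0]] are not nested, i.e. neither interval contains the other, and both intervals are nondegenerate. Then there exist two concave functions l*_α, l*_β : [0,1] → ℝ (each of the bilinear form p ↦ min{C_R, p·C_F}) such that under l*_α one has VoI_G(j) = 0 ≤ VoI_G(i), while under l*_β one has VoI_G(i) = 0 ≤ VoI_G(j). -/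
open scoped Classical

section Helpers

variable {Ω : Type*} [Fintype Ω]

lemma Pr_nonneg' (w : Ω → ℝ) (hw0 : ∀ ω, 0 ≤ w ω) (E : Ω → Prop) : 0 ≤ Pr w E :=
  Finset.sum_nonneg fun ω _ => hw0 ω

lemma Pr_mono' (w : Ω → ℝ) (hw0 : ∀ ω, 0 ≤ w ω) {A B : Ω → Prop} (h : ∀ ω, A ω → B ω) :
    Pr w A ≤ Pr w B := by
  apply Finset.sum_le_sum_of_subset_of_nonneg
  · intro ω hω
    simp only [Finset.mem_filter, Finset.mem_univ, true_and] at *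
    exact h ω hω
  · intro ω _ _; exact hw0 ω

lemma cPr_nonneg' (w : Ω → ℝ) (hw0 : ∀ ω, 0 ≤ w ω) (A B : Ω → Prop) (hB : 0 < Pr w B) :
    0 ≤ cPr w A B :=
  div_nonneg (Pr_nonneg' w hw0 _) hB.le

lemma cPr_le_one' (w : Ω → ℝ) (hw0 : ∀ ω, 0 ≤ w ω) (A B : Ω → Prop) (hB : 0 < Pr w B) :
    cPr w A B ≤ 1 :=
  (div_le_one hB).2 (Pr_mono' w hw0 fun ω h => h.2)

lemma Pr_add_compl (w : Ω → ℝ) (y : Ω → Bool) :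
    Pr w (fun ω => y ω = false) + Pr w (fun ω => y ω = true) = ∑ ω, w ω := by
  simp only [Pr, Finset.sum_filter, ← Finset.sum_add_distrib]
  apply Finset.sum_congr rfl
  intro ω _
  by_cases hy : y ω = false
  · simp [hy]
  · have hy' : y ω = true := by simpa using hy
    simp [hy', hy]

lemma Pr_true_compl (w : Ω → ℝ) (hw1 : ∑ ω, w ω = 1) (y : Ω → Bool) :
    Pr w (fun ω => y ω = true) = 1 - Pr w (fun ω => y ω = false) := by
  have h := Pr_add_compl w y
  rw [hw1] at h
  linarith

lemma Pr_split (w : Ω → ℝ) (F : Ω → Prop) (y : Ω → Bool) :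
    Pr w (fun ω => F ω ∧ y ω = false) + Pr w (fun ω => F ω ∧ y ω = true) = Pr w F := by
  simp only [Pr, Finset.sum_filter, ← Finset.sum_add_distrib]
  apply Finset.sum_congr rfl
  intro ω _
  by_cases hy : y ω = false
  · by_cases hf : F ω <;> simp [hy, hf]
  · have hy' : y ω = true := by simpa using hy
    by_cases hf : F ω <;> simp [hy', hy, hf]

lemma total_prob (w : Ω → ℝ) (hw1 : ∑ ω, w ω = 1) (F : Ω → Prop) (y : Ω → Bool)
    (h0 : 0 < Pr w (fun ω => y ω = false)) (h1 : Pr w (fun ω => y ω = false) < 1) :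
    Pr w F = Pr w (fun ω => y ω = false) * cPr w F (fun ω => y ω = false)
      + (1 - Pr w (fun ω => y ω = false)) * cPr w F (fun ω => y ω = true) := by
  have htc := Pr_true_compl w hw1 y
  have ht0 : 0 < Pr w (fun ω => y ω = true) := by rw [htc]; linarith
  have e1 : Pr w (fun ω => y ω = false) * cPr w F (fun ω => y ω = false)
      = Pr w (fun ω => F ω ∧ y ω = false) := by
    rw [cPr, mul_comm, div_mul_cancel₀ _ h0.ne']
  have e2 : (1 - Pr w (fun ω => y ω = false)) * cPr w F (fun ω => y ω = true)
      = Pr w (fun ω => F ω ∧ y ω = true) := by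
    rw [← htc, cPr, mul_comm, div_mul_cancel₀ _ ht0.ne']
  rw [e1, e2, Pr_split]

lemma voi_nonneg (w : Ω → ℝ) (hw0 : ∀ ω, 0 ≤ w ω) (hw1 : ∑ ω, w ω = 1)
    (F : Ω → Prop) (y : Ω → Bool)
    (h0 : 0 < Pr w (fun ω => y ω = false)) (h1 : Pr w (fun ω => y ω = false) < 1)
    (CR : ℝ) :
    0 ≤ VoIG w F y (fun p => min CR (p * 1)) := by
  have htot := total_prob w hw1 F y h0 h1
  set h := Pr w (fun ω => y ω = false) with hh
  set a := cPr w F (fun ω => y ω = false) with ha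
  set b := cPr w F (fun ω => y ω = true) with hb
  simp only [VoIG, postLoss, mul_one, ← hh, ← ha, ← hb]
  have key : h * min CR a + (1 - h) * min CR b ≤ min CR (Pr w F) := by
    apply le_min
    · nlinarith [min_le_left CR a, min_le_left CR b]
    · rw [htot]
      nlinarith [min_le_right CR a, min_le_right CR b]
  linarith

lemma voi_zero_flat (w : Ω → ℝ) (hw0 : ∀ ω, 0 ≤ w ω) (hw1 : ∑ ω, w ω = 1)
    (F : Ω → Prop) (y : Ω → Bool)
    (h0 : 0 < Pr w (fun ω => y ω = false)) (h1 : Pr w (fun ω => y ω = false) < 1)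
    (CR : ℝ)
    (hCR : CR ≤ cPr w F (fun ω => y ω = true))
    (hba : cPr w F (fun ω => y ω = true) ≤ cPr w F (fun ω => y ω = false)) :
    VoIG w F y (fun p => min CR (p * 1)) = 0 := by
  have htot := total_prob w hw1 F y h0 h1
  set h := Pr w (fun ω => y ω = false) with hh
  set a := cPr w F (fun ω => y ω = false) with ha
  set b := cPr w F (fun ω => y ω = true) with hb
  have hPF : CR ≤ Pr w F := by rw [htot]; nlinarith
  simp only [VoIG, postLoss, mul_one, ← hh, ← ha, ← hb]
  rw [min_eq_left hPF, min_eq_left (le_trans hCR hba), min_eq_left hCR]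
  ring

lemma voi_zero_lin (w : Ω → ℝ) (hw0 : ∀ ω, 0 ≤ w ω) (hw1 : ∑ ω, w ω = 1)
    (F : Ω → Prop) (y : Ω → Bool)
    (h0 : 0 < Pr w (fun ω => y ω = false)) (h1 : Pr w (fun ω => y ω = false) < 1)
    (CR : ℝ)
    (hCR : cPr w F (fun ω => y ω = false) ≤ CR)
    (hba : cPr w F (fun ω => y ω = true) ≤ cPr w F (fun ω => y ω = false)) :
    VoIG w F y (fun p => min CR (p * 1)) = 0 := by
  have htot := total_prob w hw1 F y h0 h1
  set h := Pr w (fun ω => y ω = false) with hh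
  set a := cPr w F (fun ω => y ω = false) with ha
  set b := cPr w F (fun ω => y ω = true) with hb
  have hPF : Pr w F ≤ CR := by rw [htot]; nlinarith
  simp only [VoIG, postLoss, mul_one, ← hh, ← ha, ← hb]
  rw [min_eq_right hPF, min_eq_right hCR, min_eq_right (le_trans hba hCR)]
  rw [htot]; ring

end Helpers

/-- If the posterior intervals `I_i` and `I_j` are nondegenerate and not nested
(neither contains the other), then there exist two bilinear concave losses
`l*_α(p) = min{CRa, p·CFa}` and `l*_β(p) = min{CRb, p·CFb}` such that under `l*_α` one has
`VoI_G(j) = 0 ≤ VoI_G(i)`, while under `l*_β` one has `VoI_G(i) = 0 ≤ VoI_G(j)`. -/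
theorem not_nested_priority_depends_on_loss {Ω : Type*} [Fintype Ω] (w : Ω → ℝ)
    (hw0 : ∀ ω, 0 ≤ w ω) (hw1 : ∑ ω, w ω = 1)
    (u yi yj : Ω → Bool)
    (hi0 : 0 < Pr w (fun ω => yi ω = false)) (hi1 : Pr w (fun ω => yi ω = false) < 1)
    (hj0 : 0 < Pr w (fun ω => yj ω = false)) (hj1 : Pr w (fun ω => yj ω = false) < 1)
    (hnondeg_i : cPr w (fun ω => u ω = false) (fun ω => yi ω = true)
        < cPr w (fun ω => u ω = false) (fun ω => yi ω = false))
    (hnondeg_j : cPr w (fun ω => u ω = false) (fun ω => yj ω = true)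
        < cPr w (fun ω => u ω = false) (fun ω => yj ω = false))
    (hnotnest_ij : ¬ (cPr w (fun ω => u ω = false) (fun ω => yi ω = true)
            ≤ cPr w (fun ω => u ω = false) (fun ω => yj ω = true)
          ∧ cPr w (fun ω => u ω = false) (fun ω => yj ω = false)
            ≤ cPr w (fun ω => u ω = false) (fun ω => yi ω = false)))
    (hnotnest_ji : ¬ (cPr w (fun ω => u ω = false) (fun ω => yj ω = true)
            ≤ cPr w (fun ω => u ω = false) (fun ω => yi ω = true)
          ∧ cPr w (fun ω => u ω = false) (fun ω => yi ω = false)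
            ≤ cPr w (fun ω => u ω = false) (fun ω => yj ω = false))) :
    ∃ CRa CFa CRb CFb : ℝ,
      0 < CRa ∧ CRa < CFa ∧ 0 < CRb ∧ CRb < CFb
      ∧ VoIG w (fun ω => u ω = false) yj (fun p => min CRa (p * CFa)) = 0
      ∧ 0 ≤ VoIG w (fun ω => u ω = false) yi (fun p => min CRa (p * CFa))
      ∧ VoIG w (fun ω => u ω = false) yi (fun p => min CRb (p * CFb)) = 0
      ∧ 0 ≤ VoIG w (fun ω => u ω = false) yj (fun p => min CRb (p * CFb)) := by
  set F := (fun ω => u ω = false) with hF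
  set ai := cPr w F (fun ω => yi ω = false) with hai
  set bi := cPr w F (fun ω => yi ω = true) with hbi
  set aj := cPr w F (fun ω => yj ω = false) with haj
  set bj := cPr w F (fun ω => yj ω = true) with hbj
  have hit0 : 0 < Pr w (fun ω => yi ω = true) := by
    rw [Pr_true_compl w hw1 yi]; linarith
  have hjt0 : 0 < Pr w (fun ω => yj ω = true) := by
    rw [Pr_true_compl w hw1 yj]; linarith
  have hbi0 : 0 ≤ bi := cPr_nonneg' w hw0 _ _ hit0
  have hbj0 : 0 ≤ bj := cPr_nonneg' w hw0 _ _ hjt0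
  have hai1 : ai ≤ 1 := cPr_le_one' w hw0 _ _ hi0
  have haj1 : aj ≤ 1 := cPr_le_one' w hw0 _ _ hj0
  have hcase : (bi < bj ∧ ai < aj) ∨ (bj < bi ∧ aj < ai) := by
    push_neg at hnotnest_ij hnotnest_ji
    rcases le_or_gt bi bj with hle | hlt
    · have h1 := hnotnest_ij hle
      have h2 : ¬ bj ≤ bi := fun hc => absurd h1.le (not_le.2 (hnotnest_ji hc))
      exact Or.inl ⟨not_le.1 h2, h1⟩
    · exact Or.inr ⟨hlt, hnotnest_ji hlt.le⟩
  rcases hcase with ⟨hb, hA⟩ | ⟨hb, hA⟩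
  · refine ⟨bj, 1, ai, 1, ?_, ?_, ?_, ?_, ?_, ?_, ?_, ?_⟩
    · linarith
    · linarith
    · linarith
    · linarith
    · exact voi_zero_flat w hw0 hw1 F yj hj0 hj1 bj le_rfl hnondeg_j.le
    · exact voi_nonneg w hw0 hw1 F yi hi0 hi1 bj
    · exact voi_zero_lin w hw0 hw1 F yi hi0 hi1 ai le_rfl hnondeg_i.le
    · exact voi_nonneg w hw0 hw1 F yj hj0 hj1 ai
  · refine ⟨aj, 1, bi, 1, ?_, ?_, ?_, ?_, ?_, ?_, ?_, ?_⟩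
    · linarith
    · linarith
    · linarith
    · linarith
    · exact voi_zero_lin w hw0 hw1 F yj hj0 hj1 aj le_rfl hnondeg_j.le
    · exact voi_nonneg w hw0 hw1 F yi hi0 hi1 aj
    · exact voi_zero_flat w hw0 hw1 F yi hi0 hi1 bi le_rfl hnondeg_i.le
    · exact voi_nonneg w hw0 hw1 F yj hj0 hj1 bi
end
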